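/- Suppose every element i of a finite set T has exactly one successor and exactly one predecessor in a relation l ⊆ (T ∪ {s}) × (T ∪ {t}), where the successor of i lies in T ∪ {t}, the predecessor of j lies in T ∪ {s}, and no element of T is its own successor. Then the relation l decomposes T into a disjoint union of finite chains, each starting at an element whose predecessor is s and ending at an element whose successor is t, provided the relation restricted to T × T is acyclic. Consequently, the number of chains equals both the number of i ∈ T with successor t and the number of j ∈ T with predecessor s. -/

import Mathlib

open Relation List

section SdvspHelpers
variable {ι : Type*} [DecidableEq ι]
set_option linter.unusedSectionVars false

/-- Build the chain starting at `i` by iterating the successor map `f`, with fuel `n`. -/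
def sdvspBC (f : ι → Option ι) : ℕ → ι → List ι
  | 0, i => [i]
  | n+1, i =>
    match f i with
    | none => [i]
    | some j => i :: sdvspBC f n j

lemma sdvspBC_zero (f : ι → Option ι) (i : ι) : sdvspBC f 0 i = [i] := rfl

lemma sdvspBC_succ_none {f : ι → Option ι} {i : ι} (h : f i = none) (n : ℕ) :
    sdvspBC f (n+1) i = [i] := by simp [sdvspBC, h]

lemma sdvspBC_succ_some {f : ι → Option ι} {i j : ι} (h : f i = some j) (n : ℕ) :
    sdvspBC f (n+1) i = i :: sdvspBC f n j := by simp [sdvspBC, h]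

lemma sdvspBC_ne_nil (f : ι → Option ι) (n : ℕ) (i : ι) : sdvspBC f n i ≠ [] := by
  cases n with
  | zero => simp [sdvspBC_zero]
  | succ n =>
    cases h : f i with
    | none => simp [sdvspBC_succ_none h]
    | some j => simp [sdvspBC_succ_some h]

lemma sdvspBC_head? (f : ι → Option ι) (n : ℕ) (i : ι) : (sdvspBC f n i).head? = some i := by
  cases n with
  | zero => simp [sdvspBC_zero]
  | succ n =>
    cases h : f i with
    | none => simp [sdvspBC_succ_none h]
    | some j => simp [sdvspBC_succ_some h]

lemma sdvspBC_head (f : ι → Option ι) (n : ℕ) (i : ι) (h : sdvspBC f n i ≠ []) :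
    (sdvspBC f n i).head h = i := by
  have h2 := sdvspBC_head? f n i
  rwa [List.head?_eq_head h, Option.some_inj] at h2

lemma sdvspBC_mem_self (f : ι → Option ι) (n : ℕ) (i : ι) : i ∈ sdvspBC f n i := by
  have h := sdvspBC_ne_nil f n i
  have h2 := sdvspBC_head f n i h
  have h3 := List.head_mem h
  rwa [h2] at h3

lemma sdvspBC_chain' (f : ι → Option ι) (n : ℕ) (i : ι) :
    List.Chain' (fun a b => f a = some b) (sdvspBC f n i) := by
  induction n generalizing i with
  | zero => rw [sdvspBC_zero]; exact List.isChain_singleton _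
  | succ n ih =>
    cases h : f i with
    | none => rw [sdvspBC_succ_none h]; exact List.isChain_singleton _
    | some j =>
      rw [sdvspBC_succ_some h, List.Chain', List.isChain_cons]
      refine ⟨?_, ih j⟩
      intro b hb
      rw [sdvspBC_head? f n j, Option.mem_def, Option.some_inj] at hb
      exact hb ▸ h

lemma sdvspBC_mem_T {T : Finset ι} {f : ι → Option ι}
    (hfT : ∀ i ∈ T, f i = none ∨ ∃ j ∈ T, f i = some j)
    (n : ℕ) {i : ι} (hi : i ∈ T) : ∀ k ∈ sdvspBC f n i, k ∈ T := by
  induction n generalizing i with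
  | zero =>
    intro k hk
    rw [sdvspBC_zero, List.mem_singleton] at hk
    rwa [hk]
  | succ n ih =>
    intro k hk
    cases h : f i with
    | none =>
      rw [sdvspBC_succ_none h, List.mem_singleton] at hk
      rwa [hk]
    | some j =>
      rw [sdvspBC_succ_some h, List.mem_cons] at hk
      rcases hk with hk | hk
      · rwa [hk]
      · rcases hfT i hi with hn | ⟨j', hj', hfij⟩
        · rw [h] at hn; exact absurd hn (by simp)
        · rw [h, Option.some_inj] at hfij
          exact ih (hfij ▸ hj') k hk

/-- Elements of the built chain are reachable from the start. -/
lemma sdvspBC_reach {T : Finset ι} {f : ι → Option ι}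
    (hfT : ∀ i ∈ T, f i = none ∨ ∃ j ∈ T, f i = some j)
    (n : ℕ) {i : ι} (hi : i ∈ T) :
    ∀ k ∈ sdvspBC f n i, ReflTransGen (fun a b => a ∈ T ∧ b ∈ T ∧ f a = some b) i k := by
  induction n generalizing i with
  | zero =>
    intro k hk
    rw [sdvspBC_zero, List.mem_singleton] at hk
    rw [hk]
  | succ n ih =>
    intro k hk
    cases h : f i with
    | none =>
      rw [sdvspBC_succ_none h, List.mem_singleton] at hk
      rw [hk]
    | some j =>
      rw [sdvspBC_succ_some h, List.mem_cons] at hk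
      rcases hk with hk | hk
      · rw [hk]
      · rcases hfT i hi with hn | ⟨j', hj', hfij⟩
        · rw [h] at hn; exact absurd hn (by simp)
        · rw [h, Option.some_inj] at hfij
          subst hfij
          exact ReflTransGen.head ⟨hi, hj', h⟩ (ih hj' k hk)

lemma sdvspBC_nodup {T : Finset ι} {f : ι → Option ι}
    (hfT : ∀ i ∈ T, f i = none ∨ ∃ j ∈ T, f i = some j)
    (hacyc : ∀ i, ¬ Relation.TransGen (fun a b => a ∈ T ∧ b ∈ T ∧ f a = some b) i i)
    (n : ℕ) {i : ι} (hi : i ∈ T) : (sdvspBC f n i).Nodup := by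
  induction n generalizing i with
  | zero => simp [sdvspBC_zero]
  | succ n ih =>
    cases h : f i with
    | none => simp [sdvspBC_succ_none h]
    | some j =>
      rcases hfT i hi with hn | ⟨j', hj', hfij⟩
      · rw [h] at hn; exact absurd hn (by simp)
      rw [h, Option.some_inj] at hfij
      subst hfij
      rw [sdvspBC_succ_some h, List.nodup_cons]
      refine ⟨?_, ih hj'⟩
      intro hmem
      have hreach := sdvspBC_reach hfT n hj' i hmem
      exact hacyc i (TransGen.head' ⟨hi, hj', h⟩ hreach)

lemma sdvspBC_length_le {T : Finset ι} {f : ι → Option ι}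
    (hfT : ∀ i ∈ T, f i = none ∨ ∃ j ∈ T, f i = some j)
    (hacyc : ∀ i, ¬ Relation.TransGen (fun a b => a ∈ T ∧ b ∈ T ∧ f a = some b) i i)
    (n : ℕ) {i : ι} (hi : i ∈ T) : (sdvspBC f n i).length ≤ T.card := by
  have hnd := sdvspBC_nodup hfT hacyc n hi
  have hsub : (sdvspBC f n i).toFinset ⊆ T := by
    intro k hk
    rw [List.mem_toFinset] at hk
    exact sdvspBC_mem_T hfT n hi k hk
  calc (sdvspBC f n i).length = (sdvspBC f n i).toFinset.card :=
        (List.toFinset_card_of_nodup hnd).symm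
    _ ≤ T.card := Finset.card_le_card hsub

lemma sdvspBC_last_or_length (f : ι → Option ι) (n : ℕ) (i : ι) :
    f ((sdvspBC f n i).getLast (sdvspBC_ne_nil f n i)) = none ∨
      (sdvspBC f n i).length = n + 1 := by
  induction n generalizing i with
  | zero =>
    cases h : f i with
    | none =>
      left
      have : (sdvspBC f 0 i).getLast (sdvspBC_ne_nil f 0 i) = i := by simp [sdvspBC_zero]
      rw [this, h]
    | some j => right; simp [sdvspBC_zero]
  | succ n ih =>
    cases h : f i with
    | none =>
      left
      have hl : (sdvspBC f (n+1) i).getLast (sdvspBC_ne_nil f (n+1) i) = i := by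
        simp [sdvspBC_succ_none h]
      rw [hl, h]
    | some j =>
      have he : sdvspBC f (n+1) i = i :: sdvspBC f n j := sdvspBC_succ_some h n
      have hl : (sdvspBC f (n+1) i).getLast (sdvspBC_ne_nil f (n+1) i) =
          (sdvspBC f n j).getLast (sdvspBC_ne_nil f n j) := by
        rw [List.getLast_congr _ (List.cons_ne_nil _ _) he, List.getLast_cons (sdvspBC_ne_nil f n j)]
      rcases ih j with h1 | h1
      · left; rw [hl]; exact h1
      · right; rw [he, List.length_cons, h1]

/-- With fuel `T.card`, the chain ends at an element without successor. -/
lemma sdvspBC_last_none {T : Finset ι} {f : ι → Option ι}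
    (hfT : ∀ i ∈ T, f i = none ∨ ∃ j ∈ T, f i = some j)
    (hacyc : ∀ i, ¬ Relation.TransGen (fun a b => a ∈ T ∧ b ∈ T ∧ f a = some b) i i)
    {i : ι} (hi : i ∈ T) :
    f ((sdvspBC f T.card i).getLast (sdvspBC_ne_nil f T.card i)) = none := by
  rcases sdvspBC_last_or_length f T.card i with h | h
  · exact h
  · exfalso
    have := sdvspBC_length_le hfT hacyc T.card hi
    omega

lemma sdvspBC_prefix (f : ι → Option ι) (n : ℕ) (i : ι) :
    sdvspBC f n i <+: sdvspBC f (n+1) i := by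
  induction n generalizing i with
  | zero =>
    cases h : f i with
    | none => rw [sdvspBC_zero, sdvspBC_succ_none h]
    | some j => rw [sdvspBC_zero, sdvspBC_succ_some h]; exact ⟨sdvspBC f 0 j, rfl⟩
  | succ n ih =>
    cases h : f i with
    | none => rw [sdvspBC_succ_none h, sdvspBC_succ_none h]
    | some j =>
      rw [sdvspBC_succ_some h, sdvspBC_succ_some h]
      obtain ⟨t, ht⟩ := ih j
      exact ⟨t, by rw [List.cons_append, ht]⟩

lemma sdvspBC_mem_mono (f : ι → Option ι) {m n : ℕ} (h : m ≤ n) (i k : ι)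
    (hk : k ∈ sdvspBC f m i) : k ∈ sdvspBC f n i := by
  induction h with
  | refl => exact hk
  | step h ih => exact (sdvspBC_prefix f _ i).subset ih

lemma sdvspBC_exists_mem_of_reach {T : Finset ι} {f : ι → Option ι} {i k : ι}
    (h : ReflTransGen (fun a b => a ∈ T ∧ b ∈ T ∧ f a = some b) i k) :
    ∃ n, k ∈ sdvspBC f n i := by
  induction h using ReflTransGen.head_induction_on with
  | refl => exact ⟨0, sdvspBC_mem_self f 0 k⟩
  | head hab _ ih =>
    obtain ⟨n, hn⟩ := ih
    exact ⟨n + 1, by rw [sdvspBC_succ_some hab.2.2]; exact List.mem_cons_of_mem _ hn⟩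

lemma sdvspBC_stable_step (f : ι → Option ι) (n : ℕ) (i : ι)
    (h : f ((sdvspBC f n i).getLast (sdvspBC_ne_nil f n i)) = none) :
    sdvspBC f (n+1) i = sdvspBC f n i := by
  induction n generalizing i with
  | zero =>
    have hl : (sdvspBC f 0 i).getLast (sdvspBC_ne_nil f 0 i) = i := by simp [sdvspBC_zero]
    rw [hl] at h
    rw [sdvspBC_succ_none h, sdvspBC_zero]
  | succ n ih =>
    cases hf : f i with
    | none => rw [sdvspBC_succ_none hf, sdvspBC_succ_none hf]
    | some j =>
      have he : sdvspBC f (n+1) i = i :: sdvspBC f n j := sdvspBC_succ_some hf n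
      have hl : (sdvspBC f (n+1) i).getLast (sdvspBC_ne_nil f (n+1) i) =
          (sdvspBC f n j).getLast (sdvspBC_ne_nil f n j) := by
        rw [List.getLast_congr _ (List.cons_ne_nil _ _) he, List.getLast_cons (sdvspBC_ne_nil f n j)]
      rw [hl] at h
      rw [sdvspBC_succ_some hf, sdvspBC_succ_some hf, ih j h]

lemma sdvspBC_stable (f : ι → Option ι) (N : ℕ) (i : ι)
    (h : f ((sdvspBC f N i).getLast (sdvspBC_ne_nil f N i)) = none) :
    ∀ m, N ≤ m → sdvspBC f m i = sdvspBC f N i := by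
  intro m hm
  induction hm with
  | refl => rfl
  | @step m hm ih =>
    have h' : f ((sdvspBC f m i).getLast (sdvspBC_ne_nil f m i)) = none := by
      have := List.getLast_congr (sdvspBC_ne_nil f m i) (sdvspBC_ne_nil f N i) ih
      rw [this]; exact h
    rw [sdvspBC_stable_step f m i h', ih]

/-- Every element reachable from `i` is in the fuel-`T.card` chain. -/
lemma sdvspBC_mem_card {T : Finset ι} {f : ι → Option ι}
    (hfT : ∀ i ∈ T, f i = none ∨ ∃ j ∈ T, f i = some j)
    (hacyc : ∀ i, ¬ Relation.TransGen (fun a b => a ∈ T ∧ b ∈ T ∧ f a = some b) i i)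
    {i k : ι} (hi : i ∈ T)
    (h : ReflTransGen (fun a b => a ∈ T ∧ b ∈ T ∧ f a = some b) i k) :
    k ∈ sdvspBC f T.card i := by
  obtain ⟨n, hn⟩ := sdvspBC_exists_mem_of_reach h
  rcases le_or_gt n T.card with hle | hlt
  · exact sdvspBC_mem_mono f hle i k hn
  · have := sdvspBC_stable f T.card i (sdvspBC_last_none hfT hacyc hi) n hlt.le
    rwa [this] at hn

/-- Backward determinism: two sources with no predecessor reaching the same element coincide. -/
lemma sdvsp_uniq_start {T : Finset ι} {f g : ι → Option ι}
    (hfg : ∀ i ∈ T, ∀ j ∈ T, (f i = some j ↔ g j = some i))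
    {a a' : ι} (ha : g a = none) (ha' : g a' = none) :
    ∀ i, ReflTransGen (fun a b => a ∈ T ∧ b ∈ T ∧ f a = some b) a i →
      ReflTransGen (fun a b => a ∈ T ∧ b ∈ T ∧ f a = some b) a' i → a = a' := by
  intro i h1
  induction h1 with
  | refl =>
    intro h2
    rcases h2.cases_tail with h | ⟨x, hx, hrel⟩
    · exact h
    · exact absurd ((hfg x hrel.1 a hrel.2.1).mp hrel.2.2) (by rw [ha]; simp)
  | @tail b c hab hbc ih =>
    intro h2
    rcases h2.cases_tail with h | ⟨x, hx, hrel⟩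
    · exfalso
      subst h
      exact absurd ((hfg b hbc.1 _ hbc.2.1).mp hbc.2.2) (by rw [ha']; simp)
    · have h1' : g c = some b := (hfg b hbc.1 c hbc.2.1).mp hbc.2.2
      have h2' : g c = some x := (hfg x hrel.1 c hrel.2.1).mp hrel.2.2
      rw [h1', Option.some_inj] at h2'
      exact ih (h2' ▸ hx)

/-- In a chain, an element without successor is the last one. -/
lemma sdvsp_chain'_last {f : ι → Option ι} :
    ∀ (L : List ι) (hL : L ≠ []), List.Chain' (fun a b => f a = some b) L →
      ∀ e ∈ L, f e = none → e = L.getLast hL := by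
  intro L
  induction L with
  | nil => intro h; cases h rfl
  | cons x tl ih =>
    intro _ hch e he hfe
    cases tl with
    | nil => simpa using he
    | cons y tl' =>
      rw [List.Chain', List.isChain_cons_cons] at hch
      rw [List.mem_cons] at he
      rcases he with he | he
      · subst he; rw [hch.1] at hfe; cases hfe
      · rw [List.getLast_cons (by simp)]
        exact ih (by simp) hch.2 e he hfe

end SdvspHelpers

/-- the SDVSP assignment constraints decompose the trips into disjoint
chains from the depot source `s` (encoded as predecessor `none`) to the depot sink `t`
(encoded as successor `none`). `f i` is the successor of `i` in `T ∪ {t}` and `g j` is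
the predecessor of `j` in `T ∪ {s}`, with `none` standing for the depot. -/
theorem sdvsp_chain_decomposition {ι : Type*} [DecidableEq ι]
    (T : Finset ι) (f g : ι → Option ι)
    -- successor of i ∈ T lies in T ∪ {t}
    (hfT : ∀ i ∈ T, f i = none ∨ ∃ j ∈ T, f i = some j)
    -- predecessor of j ∈ T lies in T ∪ {s}
    (hgT : ∀ j ∈ T, g j = none ∨ ∃ i ∈ T, g j = some i)
    -- successor/predecessor consistency (each trip has exactly one of each)
    (hfg : ∀ i ∈ T, ∀ j ∈ T, (f i = some j ↔ g j = some i))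
    -- no element of T is its own successor
    (hirr : ∀ i ∈ T, f i ≠ some i)
    -- the relation restricted to T × T is acyclic
    (hacyc : ∀ i, ¬ Relation.TransGen (fun a b => a ∈ T ∧ b ∈ T ∧ f a = some b) i i) :
    ∃ chains : Finset (List ι),
      -- every trip belongs to exactly one chain
      (∀ i ∈ T, ∃! L, L ∈ chains ∧ i ∈ L) ∧
      -- each chain is a nonempty sequence of trips starting after s and ending before t
      (∀ L ∈ chains, ∃ h : L ≠ [],
        (∀ i ∈ L, i ∈ T) ∧
        g (L.head h) = none ∧
        f (L.getLast h) = none ∧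
        List.Chain' (fun a b => f a = some b) L) ∧
      -- the number of chains equals the number of trips whose successor is t
      chains.card = (T.filter fun i => f i = none).card ∧
      -- and the number of trips whose predecessor is s
      chains.card = (T.filter fun j => g j = none).card := by
  classical
  have hacycg : ∀ i, ¬ Relation.TransGen (fun a b => a ∈ T ∧ b ∈ T ∧ g a = some b) i i := by
    intro i hi
    apply hacyc i
    refine (Relation.transGen_swap).mp (TransGen.mono ?_ _ _ hi)
    rintro a b ⟨ha, hb, hg'⟩
    exact ⟨hb, ha, (hfg b hb a ha).mpr hg'⟩
  -- every trip has a chain start reaching it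
  have hstart : ∀ i ∈ T, ∃ a, a ∈ T ∧ g a = none ∧
      Relation.ReflTransGen (fun a b => a ∈ T ∧ b ∈ T ∧ f a = some b) a i := by
    intro i hi
    refine ⟨(sdvspBC g T.card i).getLast (sdvspBC_ne_nil g T.card i), ?_, ?_, ?_⟩
    · exact sdvspBC_mem_T hgT T.card hi _ (List.getLast_mem _)
    · exact sdvspBC_last_none hgT hacycg hi
    · have h1 := sdvspBC_reach hgT T.card hi _ (List.getLast_mem (sdvspBC_ne_nil g T.card i))
      refine (Relation.reflTransGen_swap).mp (ReflTransGen.mono ?_ _ _ h1)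
      rintro a b ⟨ha, hb, hg'⟩
      exact ⟨hb, ha, (hfg b hb a ha).mpr hg'⟩
  have hinj : Function.Injective (fun a : ι => sdvspBC f T.card a) := by
    intro a a' h
    dsimp only at h
    have h1 := sdvspBC_head? f T.card a
    rw [h, sdvspBC_head? f T.card a'] at h1
    exact (Option.some_inj.mp h1).symm
  refine ⟨(T.filter fun j => g j = none).image (fun a => sdvspBC f T.card a), ?_, ?_, ?_, ?_⟩
  · -- unique chain through each trip
    intro i hi
    obtain ⟨a, haT, hga, hreach⟩ := hstart i hi
    refine ⟨sdvspBC f T.card a, ⟨Finset.mem_image_of_mem _ (Finset.mem_filter.mpr ⟨haT, hga⟩),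
      sdvspBC_mem_card hfT hacyc haT hreach⟩, ?_⟩
    rintro L ⟨hL, hiL⟩
    obtain ⟨a', ha', rfl⟩ := Finset.mem_image.mp hL
    rw [Finset.mem_filter] at ha'
    have hreach' := sdvspBC_reach hfT T.card ha'.1 i hiL
    rw [sdvsp_uniq_start hfg ha'.2 hga i hreach' hreach]
  · -- structure of each chain
    intro L hL
    obtain ⟨a, ha, rfl⟩ := Finset.mem_image.mp hL
    rw [Finset.mem_filter] at ha
    refine ⟨sdvspBC_ne_nil f T.card a, sdvspBC_mem_T hfT T.card ha.1, ?_, ?_,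
      sdvspBC_chain' f T.card a⟩
    · rw [sdvspBC_head f T.card a _]; exact ha.2
    · exact sdvspBC_last_none hfT hacyc ha.1
  · -- number of chains = number of trips with successor t
    have hendset : (T.filter fun i => f i = none) =
        (T.filter fun j => g j = none).image
          (fun a => (sdvspBC f T.card a).getLast (sdvspBC_ne_nil f T.card a)) := by
      ext e
      simp only [Finset.mem_filter, Finset.mem_image]
      constructor
      · rintro ⟨heT, hfe⟩
        obtain ⟨a, haT, hga, hreach⟩ := hstart e heT
        refine ⟨a, ⟨haT, hga⟩, ?_⟩
        have hmem := sdvspBC_mem_card hfT hacyc haT hreach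
        exact (sdvsp_chain'_last _ (sdvspBC_ne_nil f T.card a)
          (sdvspBC_chain' f T.card a) e hmem hfe).symm
      · rintro ⟨a, ⟨haT, hga⟩, rfl⟩
        exact ⟨sdvspBC_mem_T hfT T.card haT _ (List.getLast_mem _),
          sdvspBC_last_none hfT hacyc haT⟩
    have hinj2 : Set.InjOn (fun a => (sdvspBC f T.card a).getLast (sdvspBC_ne_nil f T.card a))
        ↑(T.filter fun j => g j = none) := by
      intro a ha a' ha' h
      dsimp only at h
      rw [Finset.mem_coe, Finset.mem_filter] at ha ha'
      have r1 := sdvspBC_reach hfT T.card ha.1 _ (List.getLast_mem (sdvspBC_ne_nil f T.card a))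
      have r2 := sdvspBC_reach hfT T.card ha'.1 _ (List.getLast_mem (sdvspBC_ne_nil f T.card a'))
      rw [← h] at r2
      exact sdvsp_uniq_start hfg ha.2 ha'.2 _ r1 r2
    rw [hendset, Finset.card_image_of_injOn hinj2,
      Finset.card_image_of_injective _ hinj]
  · -- number of chains = number of trips with predecessor s
    rw [Finset.card_image_of_injective _ hinj]
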